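/- If k(Λ) ≥ Λ(Λ−1)(2Λ+3)²(2Λ+4)⁴/(4π⁴) for all Λ, then the largest eigenvalue of X^{Λ+1} is strictly greater than the largest eigenvalue of X^Λ for every Λ ∈ ℕ. -/

import Mathlib

open scoped Matrix


/-- `b_m = √(1 + m(m-1)/k)`. -/
noncomputable def bcoef (k : ℝ) (m : ℤ) : ℝ := Real.sqrt (1 + (m * (m - 1)) / k)

/-- The matrix of the coordinate `x₁` on the fuzzy circle `S¹_Λ`. -/
noncomputable def XLam (Λ : ℕ) (k : ℝ) : Matrix (Fin (2*Λ+1)) (Fin (2*Λ+1)) ℝ :=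
  fun i j =>
    if (i : ℕ) + 1 = j then bcoef k ((Λ : ℤ) - (i : ℕ)) / 2
    else if (j : ℕ) + 1 = i then bcoef k ((Λ : ℤ) - (j : ℕ)) / 2
    else 0

lemma int_mul_pred_nonneg (m : ℤ) : 0 ≤ m * (m - 1) := by
  rcases le_or_gt m 0 with h | h
  · have h2 : m - 1 ≤ 0 := by omega
    nlinarith
  · nlinarith

lemma bcoef_arg_nonneg (k : ℝ) (hk : 0 ≤ k) (m : ℤ) : 0 ≤ ((m:ℝ) * ((m:ℝ) - 1)) / k := by
  have h1 : (0:ℝ) ≤ (m:ℝ) * ((m:ℝ) - 1) := by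
    have := int_mul_pred_nonneg m
    have : ((m * (m-1) : ℤ) : ℝ) ≥ 0 := by exact_mod_cast this
    push_cast at this; linarith
  positivity

lemma one_le_bcoef {k : ℝ} (hk : 0 ≤ k) (m : ℤ) : 1 ≤ bcoef k m := by
  rw [bcoef, Real.one_le_sqrt]
  linarith [bcoef_arg_nonneg k hk m]

lemma bcoef_nonneg (k : ℝ) (m : ℤ) : 0 ≤ bcoef k m := Real.sqrt_nonneg _

lemma bcoef_le {k : ℝ} (hk : 0 ≤ k) {m L : ℤ} (h : m * (m - 1) ≤ L * (L - 1)) :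
    bcoef k m ≤ Real.sqrt (1 + ((L:ℝ) * ((L:ℝ)-1)) / k) := by
  apply Real.sqrt_le_sqrt
  have h' : ((m:ℝ) * ((m:ℝ) - 1)) ≤ ((L:ℝ) * ((L:ℝ) - 1)) := by exact_mod_cast h
  rcases eq_or_lt_of_le hk with h0 | h0
  · simp [← h0]
  · gcongr

/-- Extension of a `Fin n` vector to `ℕ` by zero. -/
noncomputable def padded {n : ℕ} (x : Fin n → ℝ) : ℕ → ℝ :=
  fun j => if h : j < n then x ⟨j, h⟩ else 0

lemma padded_coe {n : ℕ} (x : Fin n → ℝ) (i : Fin n) : padded x (i : ℕ) = x i := by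
  simp [padded, i.isLt]

lemma sum_fin_ite {n : ℕ} (a : ℕ) (F : Fin n → ℝ) :
    (∑ j : Fin n, if a = (j:ℕ) then F j else 0) = if h : a < n then F ⟨a, h⟩ else 0 := by
  split_ifs with h
  · rw [Finset.sum_eq_single (⟨a, h⟩ : Fin n)]
    · simp
    · intro j _ hj
      rw [if_neg]
      intro hc
      exact hj (Fin.ext hc.symm)
    · simp
  · apply Finset.sum_eq_zero
    intro j _
    rw [if_neg]
    have := j.isLt
    omega

lemma mulVec_XLam (Λ : ℕ) (k : ℝ) (x : Fin (2*Λ+1) → ℝ) (i : Fin (2*Λ+1)) :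
    (XLam Λ k *ᵥ x) i = bcoef k ((Λ:ℤ) - (i:ℕ))/2 * padded x ((i:ℕ)+1)
      + (if 0 < (i:ℕ) then bcoef k ((Λ:ℤ) - (i:ℕ) + 1)/2 * padded x ((i:ℕ)-1) else 0) := by
  have key : ∀ j : Fin (2*Λ+1), XLam Λ k i j * x j =
      (if (i:ℕ)+1 = (j:ℕ) then bcoef k ((Λ:ℤ)-(i:ℕ))/2 * x j else 0)
      + (if 0 < (i:ℕ) then (if (i:ℕ)-1 = (j:ℕ) then bcoef k ((Λ:ℤ)-(i:ℕ)+1)/2 * x j else 0)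
          else 0) := by
    intro j
    by_cases h1 : (i:ℕ)+1 = (j:ℕ)
    · have h3 : ¬((i:ℕ)-1 = (j:ℕ)) := by omega
      have h2 : ¬((j:ℕ)+1 = (i:ℕ)) := by omega
      simp only [XLam, if_pos h1, if_neg h3, if_neg h2, ite_self, add_zero]
    · by_cases h2 : (j:ℕ)+1 = (i:ℕ)
      · have h0 : 0 < (i:ℕ) := by omega
        have h3 : (i:ℕ)-1 = (j:ℕ) := by omega
        have hco : (Λ:ℤ) - ((j:ℕ):ℤ) = (Λ:ℤ) - ((i:ℕ):ℤ) + 1 := by omega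
        simp only [XLam, if_neg h1, if_pos h2, if_pos h0, if_pos h3, hco, zero_add]
      · simp only [XLam, if_neg h1, if_neg h2, zero_mul, zero_add]
        split_ifs with h0 h4
        · omega
        · rfl
        · rfl
  rw [Matrix.mulVec, dotProduct]
  rw [Finset.sum_congr rfl (fun j _ => key j), Finset.sum_add_distrib]
  congr 1
  · rw [sum_fin_ite ((i:ℕ)+1) (fun j => bcoef k ((Λ:ℤ)-(i:ℕ))/2 * x j)]
    unfold padded
    split_ifs with h <;> simp
  · rcases Nat.eq_zero_or_pos (i:ℕ) with h0 | h0
    · simp [h0]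
    · simp only [if_pos h0]
      rw [sum_fin_ite ((i:ℕ)-1) (fun j => bcoef k ((Λ:ℤ)-(i:ℕ)+1)/2 * x j)]
      have hlt : (i:ℕ)-1 < 2*Λ+1 := by have := i.isLt; omega
      rw [dif_pos hlt]
      unfold padded
      rw [dif_pos hlt]

lemma quad_form (Λ : ℕ) (k : ℝ) (x : Fin (2*Λ+1) → ℝ) :
    ∑ i, (XLam Λ k *ᵥ x) i * x i
      = ∑ j ∈ Finset.range (2*Λ), bcoef k ((Λ:ℤ) - j) * (padded x j * padded x (j+1)) := by
  have h1 : ∑ i : Fin (2*Λ+1), (XLam Λ k *ᵥ x) i * x i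
      = ∑ m ∈ Finset.range (2*Λ+1), (bcoef k ((Λ:ℤ) - m)/2 * padded x (m+1)
          + (if 0 < m then bcoef k ((Λ:ℤ) - m + 1)/2 * padded x (m-1) else 0)) * padded x m := by
    rw [← Fin.sum_univ_eq_sum_range]
    apply Finset.sum_congr rfl
    intro i _
    simp only [mulVec_XLam, padded_coe]
  rw [h1]
  have expand : ∀ m ∈ Finset.range (2*Λ+1),
      (bcoef k ((Λ:ℤ) - m)/2 * padded x (m+1)
        + (if 0 < m then bcoef k ((Λ:ℤ) - m + 1)/2 * padded x (m-1) else 0)) * padded x m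
      = bcoef k ((Λ:ℤ) - m)/2 * padded x (m+1) * padded x m
        + (if 0 < m then bcoef k ((Λ:ℤ) - m + 1)/2 * padded x (m-1) * padded x m else 0) := by
    intro m _
    split_ifs <;> ring
  rw [Finset.sum_congr rfl expand, Finset.sum_add_distrib]
  have hpad : padded x (2*Λ+1) = 0 := by unfold padded; rw [dif_neg]; omega
  have hS1 : ∑ m ∈ Finset.range (2*Λ+1), bcoef k ((Λ:ℤ) - m)/2 * padded x (m+1) * padded x m
      = ∑ m ∈ Finset.range (2*Λ), bcoef k ((Λ:ℤ) - m)/2 * (padded x m * padded x (m+1)) := by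
    rw [Finset.sum_range_succ, hpad]
    rw [mul_zero, zero_mul, add_zero]
    exact Finset.sum_congr rfl (fun m _ => by ring)
  have hS2 : ∑ m ∈ Finset.range (2*Λ+1),
      (if 0 < m then bcoef k ((Λ:ℤ) - m + 1)/2 * padded x (m-1) * padded x m else 0)
      = ∑ m ∈ Finset.range (2*Λ), bcoef k ((Λ:ℤ) - m)/2 * (padded x m * padded x (m+1)) := by
    rw [Finset.sum_range_succ']
    simp only [if_neg (lt_irrefl 0), add_zero, Nat.add_sub_cancel, if_pos (Nat.succ_pos _)]
    apply Finset.sum_congr rfl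
    intro m _
    have hc : (Λ:ℤ) - ((m+1:ℕ):ℤ) + 1 = (Λ:ℤ) - (m:ℤ) := by push_cast; ring
    rw [hc]; ring
  rw [hS1, hS2, ← Finset.sum_add_distrib]
  exact Finset.sum_congr rfl (fun m _ => by ring)

section trig
open Real

lemma theta_pos {N : ℕ} : 0 < π/((N:ℝ)+1) := by positivity

lemma sin_theta_pos {N : ℕ} (j : ℕ) (h1 : 1 ≤ j) (h2 : j ≤ N) :
    0 < Real.sin ((j:ℝ)*(π/((N:ℝ)+1))) := by
  have hd : (0:ℝ) < (N:ℝ)+1 := by positivity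
  have hj1 : (1:ℝ) ≤ (j:ℝ) := by exact_mod_cast h1
  apply Real.sin_pos_of_pos_of_lt_pi
  · have := theta_pos (N := N); nlinarith
  · have hjN : (j:ℝ) < (N:ℝ)+1 := by exact_mod_cast Nat.lt_succ_of_le h2
    have h3 : (j:ℝ) * (π/((N:ℝ)+1)) < ((N:ℝ)+1) * (π/((N:ℝ)+1)) :=
      mul_lt_mul_of_pos_right hjN (theta_pos (N := N))
    rwa [mul_div_cancel₀ _ (ne_of_gt hd)] at h3

lemma sin_rec {θ : ℝ} (m : ℝ) :
    Real.sin (m*θ) + Real.sin ((m+2)*θ) = 2*Real.cos θ*Real.sin ((m+1)*θ) := by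
  have h1 : m*θ = (m+1)*θ - θ := by ring
  have h2 : (m+2)*θ = (m+1)*θ + θ := by ring
  rw [h1, h2, Real.sin_add, Real.sin_sub]
  ring

lemma sin_top {N : ℕ} : Real.sin (((N:ℝ)+1)*(π/((N:ℝ)+1))) = 0 := by
  have hd : (0:ℝ) < (N:ℝ)+1 := by positivity
  rw [mul_div_cancel₀ _ (ne_of_gt hd), Real.sin_pi]

end trig

lemma amgm_sum (N : ℕ) (hN : 1 ≤ N) (u : ℕ → ℝ) (b : ℕ → ℝ) (M : ℝ) (hM : 0 ≤ M)
    (hb : ∀ j, j < N - 1 → 0 ≤ b j ∧ b j ≤ M) :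
    ∑ j ∈ Finset.range (N-1), b j * (u j * u (j+1))
      ≤ M * Real.cos (Real.pi/((N:ℝ)+1)) * ∑ j ∈ Finset.range N, (u j)^2 := by
  set θ := Real.pi/((N:ℝ)+1) with hθ
  have hsin : ∀ j : ℕ, 1 ≤ j → j ≤ N → 0 < Real.sin ((j:ℝ)*θ) := fun j h1 h2 => sin_theta_pos j h1 h2
  -- pointwise AM-GM
  have hpt : ∀ j ∈ Finset.range (N-1), b j * (u j * u (j+1)) ≤
      M * (u j^2 * (Real.sin (((j:ℝ)+2)*θ)/Real.sin (((j:ℝ)+1)*θ)))/2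
      + M * (u (j+1)^2 * (Real.sin (((j:ℝ)+1)*θ)/Real.sin (((j:ℝ)+2)*θ)))/2 := by
    intro j hj
    rw [Finset.mem_range] at hj
    have hsa : 0 < Real.sin (((j:ℝ)+1)*θ) := by
      have := hsin (j+1) (by omega) (by omega); push_cast at this; exact this
    have hsb : 0 < Real.sin (((j:ℝ)+2)*θ) := by
      have := hsin (j+2) (by omega) (by omega); push_cast at this; exact this
    set sa := Real.sin (((j:ℝ)+1)*θ)
    set sb := Real.sin (((j:ℝ)+2)*θ)
    have step1 : b j * (u j * u (j+1)) ≤ M * (|u j| * |u (j+1)|) := by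
      have h1 : b j * (u j * u (j+1)) ≤ b j * |u j * u (j+1)| := by
        apply mul_le_mul_of_nonneg_left (le_abs_self _) (hb j hj).1
      have h2 : b j * |u j * u (j+1)| ≤ M * |u j * u (j+1)| := by
        apply mul_le_mul_of_nonneg_right (hb j hj).2 (abs_nonneg _)
      rw [abs_mul] at h1 h2
      linarith
    have step2 : |u j| * |u (j+1)| ≤ (u j^2 * (sb/sa) + u (j+1)^2 * (sa/sb))/2 := by
      have expand : (u j^2 * (sb/sa) + u (j+1)^2 * (sa/sb))/2
          = (u j^2 * sb^2 + u (j+1)^2 * sa^2)/(2*sa*sb) := by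
        field_simp
      rw [expand, le_div_iff₀ (by positivity)]
      nlinarith [sq_nonneg (|u j| * sb - |u (j+1)| * sa), sq_abs (u j), sq_abs (u (j+1)),
        mul_pos hsa hsb, abs_nonneg (u j), abs_nonneg (u (j+1))]
    calc b j * (u j * u (j+1)) ≤ M * (|u j| * |u (j+1)|) := step1
      _ ≤ M * ((u j^2 * (sb/sa) + u (j+1)^2 * (sa/sb))/2) := by
          apply mul_le_mul_of_nonneg_left step2 hM
      _ = M * (u j^2 * (sb/sa))/2 + M * (u (j+1)^2 * (sa/sb))/2 := by ring
  have hsum := Finset.sum_le_sum hpt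
  rw [Finset.sum_add_distrib] at hsum
  -- collect
  have hN' : N - 1 + 1 = N := by omega
  have hA : ∑ j ∈ Finset.range (N-1), M * (u j^2 * (Real.sin (((j:ℝ)+2)*θ)/Real.sin (((j:ℝ)+1)*θ)))/2
      = ∑ j ∈ Finset.range N, M * (u j^2 * (Real.sin (((j:ℝ)+2)*θ)/Real.sin (((j:ℝ)+1)*θ)))/2 := by
    rw [← hN', Finset.sum_range_succ]
    have hz : Real.sin (((N:ℝ)-1+2)*θ) = 0 := by
      have h1 : ((N:ℝ)-1+2) = (N:ℝ)+1 := by ring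
      rw [h1, hθ]; exact sin_top
    have hcast : (((N-1:ℕ)):ℝ) = (N:ℝ)-1 := by
      have : (1:ℕ) ≤ N := hN; push_cast [this]; ring
    rw [hcast, hz]
    simp
  have hB : ∑ j ∈ Finset.range (N-1), M * (u (j+1)^2 * (Real.sin (((j:ℝ)+1)*θ)/Real.sin (((j:ℝ)+2)*θ)))/2
      = ∑ j ∈ Finset.range N, M * (u j^2 * (Real.sin ((j:ℝ)*θ)/Real.sin (((j:ℝ)+1)*θ)))/2 := by
    conv_rhs => rw [← hN', Finset.sum_range_succ']
    have hf0 : M * (u 0 ^ 2 * (Real.sin ((↑(0:ℕ)) * θ) / Real.sin ((↑(0:ℕ) + 1) * θ))) / 2 = 0 := by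
      norm_num
    rw [hf0, add_zero]
    apply Finset.sum_congr rfl
    intro j _
    push_cast
    ring_nf
  rw [hA, hB, ← Finset.sum_add_distrib] at hsum
  refine le_trans hsum (le_of_eq ?_)
  rw [Finset.mul_sum]
  apply Finset.sum_congr rfl
  intro j hj
  rw [Finset.mem_range] at hj
  have hsa : 0 < Real.sin (((j:ℝ)+1)*θ) := by
    have := hsin (j+1) (by omega) (by omega); push_cast at this; exact this
  have hkey : Real.sin (((j:ℝ)+2)*θ)/Real.sin (((j:ℝ)+1)*θ)
      + Real.sin ((j:ℝ)*θ)/Real.sin (((j:ℝ)+1)*θ) = 2*Real.cos θ := by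
    rw [← add_div, div_eq_iff (ne_of_gt hsa)]
    linarith [sin_rec (θ := θ) (j:ℝ)]
  linear_combination (M * u j^2/2) * hkey

lemma test_sum (N : ℕ) (hN : 1 ≤ N) (b : ℕ → ℝ) (hb : ∀ j, j < N - 1 → 1 ≤ b j) :
    Real.cos (Real.pi/((N:ℝ)+1)) * ∑ j ∈ Finset.range N, (Real.sin (((j:ℝ)+1)*(Real.pi/((N:ℝ)+1))))^2
      ≤ ∑ j ∈ Finset.range (N-1),
          b j * (Real.sin (((j:ℝ)+1)*(Real.pi/((N:ℝ)+1))) * Real.sin (((j:ℝ)+2)*(Real.pi/((N:ℝ)+1)))) := by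
  set θ := Real.pi/((N:ℝ)+1) with hθ
  have hsin : ∀ j : ℕ, 1 ≤ j → j ≤ N → 0 < Real.sin ((j:ℝ)*θ) := fun j h1 h2 => sin_theta_pos j h1 h2
  have hN' : N - 1 + 1 = N := by omega
  -- step 1 : drop b down to 1
  have step1 : ∑ j ∈ Finset.range (N-1), Real.sin (((j:ℝ)+1)*θ) * Real.sin (((j:ℝ)+2)*θ)
      ≤ ∑ j ∈ Finset.range (N-1),
          b j * (Real.sin (((j:ℝ)+1)*θ) * Real.sin (((j:ℝ)+2)*θ)) := by
    apply Finset.sum_le_sum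
    intro j hj
    rw [Finset.mem_range] at hj
    have hsa : 0 < Real.sin (((j:ℝ)+1)*θ) := by
      have := hsin (j+1) (by omega) (by omega); push_cast at this; exact this
    have hsb : 0 < Real.sin (((j:ℝ)+2)*θ) := by
      have := hsin (j+2) (by omega) (by omega); push_cast at this; exact this
    nlinarith [hb j hj, mul_pos hsa hsb]
  refine le_trans (le_of_eq ?_) step1
  -- step 2 : exact identity  cosθ * Σ s(j+1)² = Σ s(j+1)s(j+2)
  have hP : ∑ j ∈ Finset.range N, Real.sin (((j:ℝ)+1)*θ) * Real.sin (((j:ℝ)+2)*θ)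
      = ∑ j ∈ Finset.range (N-1), Real.sin (((j:ℝ)+1)*θ) * Real.sin (((j:ℝ)+2)*θ) := by
    rw [← hN', Finset.sum_range_succ]
    have hcast : (((N-1:ℕ)):ℝ) = (N:ℝ)-1 := by
      have : (1:ℕ) ≤ N := hN; push_cast [this]; ring
    have hz : Real.sin (((((N-1:ℕ)):ℝ)+2)*θ) = 0 := by
      rw [hcast, show ((N:ℝ)-1+2) = (N:ℝ)+1 by ring, hθ]; exact sin_top
    rw [hcast] at hz ⊢
    rw [hz, mul_zero, add_zero, hN']
  have hQ : ∑ j ∈ Finset.range N, Real.sin (((j:ℝ)+1)*θ) * Real.sin ((j:ℝ)*θ)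
      = ∑ j ∈ Finset.range (N-1), Real.sin (((j:ℝ)+1)*θ) * Real.sin (((j:ℝ)+2)*θ) := by
    conv_lhs => rw [← hN', Finset.sum_range_succ']
    have hf0 : Real.sin ((↑(0:ℕ) + 1) * θ) * Real.sin ((↑(0:ℕ)) * θ) = 0 := by norm_num
    rw [hf0, add_zero]
    apply Finset.sum_congr rfl
    intro j _
    push_cast
    ring_nf
  have hrec2 : ∀ j : ℕ, Real.sin (((j:ℝ)+1)*θ) * Real.sin (((j:ℝ)+2)*θ)
      + Real.sin (((j:ℝ)+1)*θ) * Real.sin ((j:ℝ)*θ)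
      = 2*Real.cos θ*(Real.sin (((j:ℝ)+1)*θ))^2 := by
    intro j
    have := sin_rec (θ := θ) (j:ℝ)
    linear_combination Real.sin (((j:ℝ)+1)*θ) * this
  have hsum2 : (∑ j ∈ Finset.range N, Real.sin (((j:ℝ)+1)*θ) * Real.sin (((j:ℝ)+2)*θ))
      + (∑ j ∈ Finset.range N, Real.sin (((j:ℝ)+1)*θ) * Real.sin ((j:ℝ)*θ))
      = 2*Real.cos θ*∑ j ∈ Finset.range N, (Real.sin (((j:ℝ)+1)*θ))^2 := by
    rw [← Finset.sum_add_distrib, Finset.mul_sum]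
    exact Finset.sum_congr rfl (fun j _ => hrec2 j)
  rw [hP, hQ] at hsum2
  rw [Finset.mul_sum]
  have := hsum2
  rw [show (2:ℝ)*Real.cos θ*∑ j ∈ Finset.range N, (Real.sin (((j:ℝ)+1)*θ))^2
      = 2*(Real.cos θ*∑ j ∈ Finset.range N, (Real.sin (((j:ℝ)+1)*θ))^2) by ring] at this
  have h2 : Real.cos θ*∑ j ∈ Finset.range N, (Real.sin (((j:ℝ)+1)*θ))^2
      = ∑ j ∈ Finset.range (N-1), Real.sin (((j:ℝ)+1)*θ) * Real.sin (((j:ℝ)+2)*θ) := by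
    linarith
  rw [← h2, Finset.mul_sum]

lemma XLam_isHermitian (Λ : ℕ) (k : ℝ) : (XLam Λ k).IsHermitian := by
  rw [Matrix.IsHermitian]
  ext i j
  simp only [Matrix.conjTranspose_apply, XLam, star_trivial]
  split_ifs with h1 h2 h3 h4 <;> first | rfl | omega

lemma exists_eigvec {n : ℕ} (C : Matrix (Fin n) (Fin n) ℝ) {μ : ℝ}
    (h : Module.End.HasEigenvalue (Matrix.toLin' C) μ) :
    ∃ v : Fin n → ℝ, v ≠ 0 ∧ C *ᵥ v = μ • v := by
  obtain ⟨v, hv⟩ := h.exists_hasEigenvector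
  exact ⟨v, hv.2, by have := hv.apply_eq_smul; rwa [Matrix.toLin'_apply] at this⟩

lemma rayleigh_le_max {n : ℕ} (C : Matrix (Fin n) (Fin n) ℝ) (hC : C.IsHermitian) (β : ℝ)
    (hβ : ∀ μ : ℝ, Module.End.HasEigenvalue (Matrix.toLin' C) μ → μ ≤ β)
    (x : Fin n → ℝ) :
    ∑ i, (C *ᵥ x) i * x i ≤ β * ∑ i, (x i)^2 := by
  by_cases hx : x = 0
  · simp [hx]
  have hT : (Matrix.toEuclideanLin C).IsSymmetric := Matrix.isHermitian_iff_isSymmetric.mp hC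
  set T := Matrix.toEuclideanLin C with hTdef
  set x' : EuclideanSpace ℝ (Fin n) := (WithLp.equiv 2 (Fin n → ℝ)).symm x with hx'def
  have hx' : x' ≠ 0 := by
    intro h
    apply hx
    have := congrArg (WithLp.equiv 2 (Fin n → ℝ)) h
    simpa [hx'def] using this
  haveI : Nontrivial (EuclideanSpace ℝ (Fin n)) := nontrivial_of_ne x' 0 hx'
  -- the iSup of the Rayleigh quotient is an eigenvalue
  have hS := hT.hasEigenvalue_iSup_of_finiteDimensional
  set S : ℝ := ⨆ y : { y : EuclideanSpace ℝ (Fin n) // y ≠ 0 },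
      RCLike.re (inner (𝕜 := ℝ) (T y) (y : EuclideanSpace ℝ (Fin n))) /
        ‖(y : EuclideanSpace ℝ (Fin n))‖ ^ 2 with hSdef
  -- transfer eigenvalue to toLin'
  have htrans : Module.End.HasEigenvalue (Matrix.toLin' C) S := by
    obtain ⟨v, hv⟩ := hS.exists_hasEigenvector
    have hveq : T v = S • v := hv.apply_eq_smul
    refine Module.End.hasEigenvalue_of_hasEigenvector
      (x := (WithLp.equiv 2 (Fin n → ℝ)) v) (μ := S) ⟨?_, ?_⟩
    · rw [Module.End.mem_eigenspace_iff, show Matrix.toLin' C ((WithLp.equiv 2 (Fin n → ℝ)) v) = (WithLp.equiv 2 (Fin n → ℝ)) (T v) from rfl, hveq]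
      simp
    · intro h
      apply hv.2
      apply (WithLp.equiv 2 (Fin n → ℝ)).injective
      simpa using h
  have hSβ : S ≤ β := hβ S htrans
  -- the Rayleigh quotient of x' is at most S
  have hbdd : BddAbove (Set.range fun y : { y : EuclideanSpace ℝ (Fin n) // y ≠ 0 } =>
      RCLike.re (inner (𝕜 := ℝ) (T y) (y : EuclideanSpace ℝ (Fin n))) /
        ‖(y : EuclideanSpace ℝ (Fin n))‖ ^ 2) := by
    refine ⟨‖LinearMap.toContinuousLinearMap T‖, ?_⟩
    rintro r ⟨y, rfl⟩
    have hy : 0 < ‖(y : EuclideanSpace ℝ (Fin n))‖ := norm_pos_iff.mpr y.2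
    have h1 : RCLike.re (inner (𝕜 := ℝ) (T y) (y : EuclideanSpace ℝ (Fin n)))
        ≤ ‖T y‖ * ‖(y : EuclideanSpace ℝ (Fin n))‖ := by
      calc RCLike.re (inner (𝕜 := ℝ) (T y) (y : EuclideanSpace ℝ (Fin n)))
          ≤ |inner (𝕜 := ℝ) (T y) (y : EuclideanSpace ℝ (Fin n))| := by
            simp only [RCLike.re_to_real]; exact le_abs_self _
        _ ≤ ‖T y‖ * ‖(y : EuclideanSpace ℝ (Fin n))‖ := abs_real_inner_le_norm _ _
    have h2 : ‖T y‖ ≤ ‖LinearMap.toContinuousLinearMap T‖ * ‖(y : EuclideanSpace ℝ (Fin n))‖ :=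
      (LinearMap.toContinuousLinearMap T).le_opNorm _
    rw [div_le_iff₀ (by positivity)]
    calc RCLike.re (inner (𝕜 := ℝ) (T y) (y : EuclideanSpace ℝ (Fin n)))
        ≤ ‖T y‖ * ‖(y : EuclideanSpace ℝ (Fin n))‖ := h1
      _ ≤ ‖LinearMap.toContinuousLinearMap T‖ * ‖(y : EuclideanSpace ℝ (Fin n))‖
          * ‖(y : EuclideanSpace ℝ (Fin n))‖ := by nlinarith [norm_nonneg (T y)]
      _ = ‖LinearMap.toContinuousLinearMap T‖ * ‖(y : EuclideanSpace ℝ (Fin n))‖ ^ 2 := by ring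
  have hray : RCLike.re (inner (𝕜 := ℝ) (T x') x') / ‖x'‖ ^ 2 ≤ S :=
    le_ciSup hbdd (⟨x', hx'⟩ : { y : EuclideanSpace ℝ (Fin n) // y ≠ 0 })
  have hnx : 0 < ‖x'‖ ^ 2 := pow_pos (norm_pos_iff.mpr hx') 2
  have hfin : inner (𝕜 := ℝ) (T x') x' ≤ β * ‖x'‖ ^ 2 := by
    have := (div_le_iff₀ hnx).mp (le_trans hray hSβ)
    simpa using this
  -- rewrite in coordinates
  have hTx : T x' = (WithLp.equiv 2 (Fin n → ℝ)).symm (C *ᵥ x) := by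
    rw [hTdef, hx'def]; rfl
  have hinner : inner (𝕜 := ℝ) (T x') x' = ∑ i, (C *ᵥ x) i * x i := by
    rw [hTx]
    rw [PiLp.inner_apply]
    apply Finset.sum_congr rfl
    intro i _
    simp [hx'def, WithLp.equiv_symm_apply, RCLike.inner_apply, mul_comm]
  have hnorm : ‖x'‖ ^ 2 = ∑ i, (x i)^2 := by
    rw [← real_inner_self_eq_norm_sq, PiLp.inner_apply]
    apply Finset.sum_congr rfl
    intro i _
    simp [hx'def, WithLp.equiv_symm_apply, RCLike.inner_apply]
  rw [hinner, hnorm] at hfin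
  exact hfin

set_option maxHeartbeats 1000000 in
lemma final_ineq (Λ : ℕ) (hΛ : 1 ≤ Λ) (k : ℝ)
    (hk : (Λ:ℝ) * ((Λ:ℝ) - 1) * (2*(Λ:ℝ)+3)^2 * (2*(Λ:ℝ)+4)^4 / (4*Real.pi^4) ≤ k) :
    Real.sqrt (1 + (Λ:ℝ)*((Λ:ℝ)-1)/k) * Real.cos (Real.pi/(2*(Λ:ℝ)+2))
      < Real.cos (Real.pi/(2*(Λ:ℝ)+4)) := by
  have hπ := Real.pi_pos
  have hπ4 : Real.pi ≤ 4 := Real.pi_le_four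
  set L := (Λ:ℝ) with hL
  have hL1 : 1 ≤ L := by rw [hL]; exact_mod_cast hΛ
  set θ := Real.pi/(2*L+2) with hθdef
  set θ' := Real.pi/(2*L+4) with hθ'def
  have hθ'pos : 0 < θ' := by positivity
  have hθ'θ : θ' < θ := by
    apply div_lt_div_of_pos_left hπ (by positivity) (by linarith)
  have hθle : θ ≤ Real.pi/4 := by
    apply div_le_div_of_nonneg_left hπ.le (by norm_num) (by linarith)
  have hcosθpos : 0 < Real.cos θ := by
    apply Real.cos_pos_of_mem_Ioo
    constructor <;> [linarith; nlinarith]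
  have hcos1 : Real.cos θ ≤ 1 := Real.cos_le_one θ
  rcases eq_or_lt_of_le hL1 with h1 | h2
  · -- Λ = 1
    have hz : L*(L-1) = 0 := by rw [← h1]; ring
    rw [hz, zero_div, add_zero, Real.sqrt_one, one_mul]
    apply Real.strictAntiOn_cos ⟨by linarith, by linarith⟩ ⟨by linarith, by nlinarith⟩ hθ'θ
  · -- Λ ≥ 2 (in fact L ≥ 2 since integral)
    have hΛ2 : 2 ≤ Λ := by
      rw [hL] at h2
      exact_mod_cast h2
    have hL2 : 2 ≤ L := by rw [hL]; exact_mod_cast hΛ2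
    have hLL : 0 < L*(L-1) := by nlinarith
    have hK0 : 0 < L*(L-1)*(2*L+3)^2*(2*L+4)^4/(4*Real.pi^4) := by
      apply div_pos
      · apply mul_pos (mul_pos hLL (by positivity)) (by positivity)
      · positivity
    have hk0 : 0 < k := lt_of_lt_of_le hK0 hk
    set d := L*(L-1)/k with hddef
    have hdnn : 0 ≤ d := div_nonneg hLL.le hk0.le
    have hd : d ≤ 4*Real.pi^4/((2*L+3)^2*(2*L+4)^4) := by
      rw [hddef, div_le_div_iff₀ hk0 (by positivity)]
      have h := (div_le_iff₀ (by positivity : (0:ℝ) < 4*Real.pi^4)).mp hk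
      nlinarith [h]
    have hsq : Real.sqrt (1+d) ≤ 1 + d/2 := by
      calc Real.sqrt (1+d) ≤ Real.sqrt ((1+d/2)^2) := Real.sqrt_le_sqrt (by nlinarith)
        _ = 1+d/2 := Real.sqrt_sq (by linarith)
    have hcc : (4/Real.pi^2) * θ' * (θ - θ') ≤ Real.cos θ' - Real.cos θ := by
      rw [Real.cos_sub_cos]
      have harg : (θ'+θ)/2 ≤ Real.pi/2 := by linarith
      have hs1 : 2/Real.pi * ((θ'+θ)/2) ≤ Real.sin ((θ'+θ)/2) :=
        Real.mul_le_sin (by positivity) harg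
      have hs2 : 2/Real.pi * ((θ-θ')/2) ≤ Real.sin ((θ-θ')/2) :=
        Real.mul_le_sin (by linarith) (by linarith)
      have hflip : -2 * Real.sin ((θ'+θ)/2) * Real.sin ((θ'-θ)/2)
          = 2 * Real.sin ((θ'+θ)/2) * Real.sin ((θ-θ')/2) := by
        rw [show (θ'-θ)/2 = -((θ-θ')/2) by ring, Real.sin_neg]; ring
      rw [hflip]
      have hp1 : 0 < 2/Real.pi * ((θ'+θ)/2) := by positivity
      have hp2 : 0 ≤ 2/Real.pi * ((θ-θ')/2) := by
        have : 0 ≤ θ - θ' := by linarith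
        positivity
      have hprod : (2/Real.pi * ((θ'+θ)/2)) * (2/Real.pi * ((θ-θ')/2))
          ≤ Real.sin ((θ'+θ)/2) * Real.sin ((θ-θ')/2) :=
        mul_le_mul hs1 hs2 hp2 (le_trans hp1.le hs1)
      have hexp : (2/Real.pi * ((θ'+θ)/2)) * (2/Real.pi * ((θ-θ')/2))
          = (1/Real.pi^2) * (θ'+θ) * (θ-θ') := by field_simp
      have hπ2 : (0:ℝ) < Real.pi^2 := by positivity
      have h4 : 4*θ'*(θ-θ') ≤ 2*(θ'+θ)*(θ-θ') := by nlinarith [sq_nonneg (θ-θ')]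
      have key1 : (4/Real.pi^2)*θ'*(θ-θ') ≤ 2*((1/Real.pi^2) * (θ'+θ) * (θ-θ')) := by
        rw [show (4/Real.pi^2)*θ'*(θ-θ') = (4*θ'*(θ-θ'))/Real.pi^2 by ring,
            show 2*((1/Real.pi^2) * (θ'+θ) * (θ-θ')) = (2*(θ'+θ)*(θ-θ'))/Real.pi^2 by ring]
        exact (div_le_div_iff_of_pos_right hπ2).mpr h4
      linarith [hprod, key1, hexp]
    -- numeric comparison
    have hθdiff : θ - θ' = 2*Real.pi/((2*L+2)*(2*L+4)) := by
      rw [hθdef, hθ'def]; field_simp; ring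
    have hnum : d/2 < (4/Real.pi^2) * θ' * (θ - θ') := by
      rw [hθdiff, hθ'def]
      have hrhs : (4/Real.pi^2) * (Real.pi/(2*L+4)) * (2*Real.pi/((2*L+2)*(2*L+4)))
          = 8/((2*L+2)*(2*L+4)^2) := by field_simp; ring
      rw [hrhs]
      have hub : d/2 ≤ 2*Real.pi^4/((2*L+3)^2*(2*L+4)^4) := by
        rw [show (2:ℝ)*Real.pi^4/((2*L+3)^2*(2*L+4)^4)
            = (4*Real.pi^4/((2*L+3)^2*(2*L+4)^4))/2 by ring]
        linarith [hd]
      apply lt_of_le_of_lt hub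
      rw [div_lt_div_iff₀ (by positivity) (by positivity)]
      have h16 : Real.pi^2 ≤ 16 := by nlinarith [hπ.le, hπ4]
      have hπ4' : Real.pi^4 ≤ 256 := by nlinarith [h16, sq_nonneg Real.pi, sq_nonneg (Real.pi^2)]
      have e1 : (0:ℝ) < (2*L+4)^2 := by positivity
      have e2 : 512*(2*L+2) < 8*((2*L+3)^2*(2*L+4)^2) := by nlinarith [hL2, sq_nonneg (L-2)]
      have step1 : 2*Real.pi^4*((2*L+2)*(2*L+4)^2) ≤ 512*((2*L+2)*(2*L+4)^2) := by
        nlinarith [hπ4', mul_pos (show (0:ℝ)<2*L+2 by linarith) e1]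
      have step2 := mul_lt_mul_of_pos_right e2 e1
      nlinarith [step1, step2]
    calc Real.sqrt (1+d) * Real.cos θ ≤ (1+d/2) * Real.cos θ :=
          mul_le_mul_of_nonneg_right hsq hcosθpos.le
      _ = Real.cos θ + (d/2) * Real.cos θ := by ring
      _ ≤ Real.cos θ + d/2 := by nlinarith
      _ < Real.cos θ + (Real.cos θ' - Real.cos θ) := by
          have := lt_of_lt_of_le hnum hcc; linarith
      _ = Real.cos θ' := by ring

set_option maxHeartbeats 1000000 in
lemma alpha_upper (Λ : ℕ) (hΛ : 1 ≤ Λ) (k α : ℝ) (hk : 0 ≤ k)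
    (hα : Module.End.HasEigenvalue (Matrix.toLin' (XLam Λ k)) α) :
    α ≤ Real.sqrt (1 + (Λ:ℝ)*((Λ:ℝ)-1)/k) * Real.cos (Real.pi/(2*(Λ:ℝ)+2)) := by
  obtain ⟨v, hv0, hveq⟩ := exists_eigvec _ hα
  have hquad := quad_form Λ k v
  have hL : ∑ i, (XLam Λ k *ᵥ v) i * v i = α * ∑ i, (v i)^2 := by
    rw [hveq, Finset.mul_sum]
    apply Finset.sum_congr rfl
    intro i _
    simp only [Pi.smul_apply, smul_eq_mul]
    ring
  set M := Real.sqrt (1 + (Λ:ℝ)*((Λ:ℝ)-1)/k) with hM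
  have hMnn : 0 ≤ M := Real.sqrt_nonneg _
  have hb : ∀ j, j < (2*Λ+1) - 1 → 0 ≤ bcoef k ((Λ:ℤ)-j) ∧ bcoef k ((Λ:ℤ)-j) ≤ M := by
    intro j hj
    refine ⟨bcoef_nonneg _ _, ?_⟩
    have hcast : ((((Λ:ℤ)):ℝ) * ((((Λ:ℤ)):ℝ)-1)) = (Λ:ℝ)*((Λ:ℝ)-1) := by push_cast; ring
    have := bcoef_le (L := (Λ:ℤ)) hk (m := (Λ:ℤ)-j) ?_
    · rw [hM, ← hcast]; exact this
    · have hj' : (j:ℤ) < 2*(Λ:ℤ) := by omega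
      have hj0 : (0:ℤ) ≤ (j:ℤ) := Int.ofNat_nonneg j
      nlinarith [hj', hj0]
  have key := amgm_sum (2*Λ+1) (by omega) (padded v) (fun j => bcoef k ((Λ:ℤ)-j)) M hMnn hb
  have hsumsq : ∑ j ∈ Finset.range (2*Λ+1), (padded v j)^2 = ∑ i, (v i)^2 := by
    rw [← Fin.sum_univ_eq_sum_range (fun j => (padded v j)^2) (2*Λ+1)]
    exact Finset.sum_congr rfl (fun i _ => by rw [padded_coe])
  have hN1 : (2*Λ+1) - 1 = 2*Λ := by omega
  have hcast2 : ((2*Λ+1:ℕ):ℝ)+1 = 2*(Λ:ℝ)+2 := by push_cast; ring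
  rw [hN1, hsumsq, hcast2] at key
  have hS : 0 < ∑ i, (v i)^2 := by
    obtain ⟨i₀, hi₀⟩ := Function.ne_iff.mp hv0
    apply Finset.sum_pos' (fun i _ => sq_nonneg _)
    exact ⟨i₀, Finset.mem_univ _, pow_two_pos_of_ne_zero hi₀⟩
  have hfinal : α * ∑ i, (v i)^2 ≤ M * Real.cos (Real.pi/(2*(Λ:ℝ)+2)) * ∑ i, (v i)^2 := by
    rw [← hL, hquad]
    exact key
  exact le_of_mul_le_mul_right (by linarith [hfinal]) hS

set_option maxHeartbeats 1000000 in
lemma alpha_lower (Λ : ℕ) (k β : ℝ) (hk : 0 ≤ k)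
    (hβ : ∀ μ : ℝ, Module.End.HasEigenvalue (Matrix.toLin' (XLam (Λ+1) k)) μ → μ ≤ β) :
    Real.cos (Real.pi/(2*(Λ:ℝ)+4)) ≤ β := by
  set N := 2*(Λ+1)+1 with hN
  have hcast : ((N:ℕ):ℝ)+1 = 2*(Λ:ℝ)+4 := by rw [hN]; push_cast; ring
  set θ' := Real.pi/(2*(Λ:ℝ)+4) with hθ'
  have hθeq : Real.pi/((N:ℝ)+1) = θ' := by rw [hcast]
  set y : Fin (2*(Λ+1)+1) → ℝ := fun i => Real.sin ((((i:ℕ):ℝ)+1)*θ') with hy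
  have hray := rayleigh_le_max (XLam (Λ+1) k) (XLam_isHermitian _ _) β hβ y
  rw [quad_form] at hray
  have htest := test_sum N (by omega) (fun j => bcoef k (((Λ+1:ℕ):ℤ) - j))
    (fun j _ => one_le_bcoef hk _)
  rw [hθeq] at htest
  -- identify the test sum with the quadratic form sum
  have hmatch : ∑ j ∈ Finset.range (N-1),
      bcoef k (((Λ+1:ℕ):ℤ) - j) * (Real.sin (((j:ℝ)+1)*θ') * Real.sin (((j:ℝ)+2)*θ'))
      = ∑ j ∈ Finset.range (2*(Λ+1)),
          bcoef k (((Λ+1:ℕ):ℤ) - j) * (padded y j * padded y (j+1)) := by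
    rw [show N-1 = 2*(Λ+1) by omega]
    apply Finset.sum_congr rfl
    intro j hj
    rw [Finset.mem_range] at hj
    have hj1 : j < N := by omega
    have hj2 : j+1 < N := by omega
    rw [show padded y j = Real.sin (((j:ℝ)+1)*θ') by
        unfold y; unfold padded; rw [dif_pos hj1]]
    rw [show padded y (j+1) = Real.sin (((j:ℝ)+2)*θ') by
        unfold y; unfold padded; rw [dif_pos hj2]; push_cast; ring_nf]
  have hsumsq : ∑ j ∈ Finset.range N, (Real.sin (((j:ℝ)+1)*θ'))^2 = ∑ i, (y i)^2 := by
    rw [← Fin.sum_univ_eq_sum_range (fun j => (Real.sin (((j:ℝ)+1)*θ'))^2) N]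
  have hSy : 0 < ∑ i, (y i)^2 := by
    have h0 : 0 < Real.sin (((1:ℕ):ℝ)*(Real.pi/((N:ℝ)+1))) := sin_theta_pos 1 le_rfl (by omega)
    rw [hθeq] at h0
    apply Finset.sum_pos' (fun i _ => sq_nonneg _)
    refine ⟨⟨0, by omega⟩, Finset.mem_univ _, ?_⟩
    have : y ⟨0, by omega⟩ = Real.sin (((1:ℕ):ℝ)*θ') := by
      unfold y; norm_num
    rw [this]
    positivity
  rw [hmatch, hsumsq] at htest
  have : θ'.cos * ∑ i, (y i)^2 ≤ β * ∑ i, (y i)^2 := le_trans htest hray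
  exact le_of_mul_le_mul_right (by linarith [this]) hSy

theorem stmt_10 (k : ℕ → ℝ)
    (hk : ∀ Λ : ℕ, (Λ : ℝ) * ((Λ : ℝ) - 1) * (2 * (Λ : ℝ) + 3) ^ 2 * (2 * (Λ : ℝ) + 4) ^ 4 /
        (4 * Real.pi ^ 4) ≤ k Λ)
    (α₁ : ℕ → ℝ)
    (hα₁ : ∀ Λ : ℕ, 0 < Λ →
      IsGreatest {α : ℝ | Module.End.HasEigenvalue (Matrix.toLin' (XLam Λ (k Λ))) α} (α₁ Λ)) :
    ∀ Λ : ℕ, 0 < Λ → α₁ Λ < α₁ (Λ + 1) := by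
  have hknn : ∀ m : ℕ, 1 ≤ m → 0 ≤ k m := by
    intro m hm
    have h1 : (1:ℝ) ≤ (m:ℝ) := by exact_mod_cast hm
    have h0 : 0 ≤ (m:ℝ)*((m:ℝ)-1)*(2*(m:ℝ)+3)^2*(2*(m:ℝ)+4)^4/(4*Real.pi^4) := by
      apply div_nonneg _ (by positivity)
      apply mul_nonneg (mul_nonneg (mul_nonneg (by linarith) (by linarith)) (by positivity))
        (by positivity)
    linarith [hk m]
  intro Λ hΛ
  have h1 := alpha_upper Λ hΛ (k Λ) (α₁ Λ) (hknn Λ hΛ) (hα₁ Λ hΛ).1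
  have h2 := alpha_lower Λ (k (Λ+1)) (α₁ (Λ+1)) (hknn (Λ+1) (by omega))
    (fun μ hμ => (hα₁ (Λ+1) (by omega)).2 hμ)
  have h3 := final_ineq Λ hΛ (k Λ) (hk Λ)
  linarith
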